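/- Let (R,G) be a first strong grading, i.e., supp(R,G) is a subgroup H of G and 1 ∈ R_σ R_{σ⁻¹} for all σ ∈ H. Then the intersection graph of graded left ideals Gr_G(R) is isomorphic to the intersection graph G(R_e) of left ideals of R_e. -/

import Mathlib

open scoped Pointwise

variable {G R : Type*} [AddGroup G] [DecidableEq G] [Ring R]

/-- The set of proper nontrivial `G`-graded left ideals of `R`. -/
def hV (𝒜 : G → AddSubgroup R) [GradedRing 𝒜] : Set (Ideal R) :=
  {I | I ≠ ⊥ ∧ I ≠ ⊤ ∧ Ideal.IsHomogeneous 𝒜 I}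

/-- The intersection graph on a set of (left) ideals: two distinct ideals are
adjacent iff their intersection is nonzero. -/
def interGraph (V : Set (Ideal R)) : SimpleGraph V where
  Adj I J := I ≠ J ∧ (I : Ideal R) ⊓ (J : Ideal R) ≠ ⊥
  symm := ⟨fun I J ⟨h1, h2⟩ => ⟨h1.symm, by rwa [inf_comm] at h2⟩⟩
  loopless := ⟨fun I ⟨h1, _⟩ => h1 rfl⟩
/-- The set of proper nontrivial left ideals of the identity component `R_e = 𝒜 0`. -/
def V0 (𝒜 : G → AddSubgroup R) [GradedRing 𝒜] : Set (Ideal ↥(𝒜 0)) :=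
  {I | I ≠ ⊥ ∧ I ≠ ⊤}

/-- The inclusion of the identity component as a ring hom. -/
def gz (𝒜 : G → AddSubgroup R) [GradedRing 𝒜] : ↥(𝒜 0) →+* R :=
  (SetLike.GradeZero.subring 𝒜).subtype

/-- For `j` of degree zero, the degree-zero component of `r * j` is `r₀ * j`. -/
theorem decompose_mul_zero (𝒜 : G → AddSubgroup R) [GradedRing 𝒜] {j : R} (hj : j ∈ 𝒜 0)
    (r : R) :
    (DirectSum.decompose 𝒜 (r * j) 0 : R) = (DirectSum.decompose 𝒜 r 0 : R) * j := by
  induction r using DirectSum.Decomposition.inductionOn 𝒜 with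
  | zero => simp
  | @homogeneous i m =>
      by_cases h : i = 0
      · subst h
        have hm : (m : R) ∈ 𝒜 0 := m.2
        have hmj : (m : R) * j ∈ 𝒜 0 := by
          simpa using SetLike.mul_mem_graded hm hj
        rw [DirectSum.decompose_of_mem_same 𝒜 hm, DirectSum.decompose_of_mem_same 𝒜 hmj]
      · have hm : (m : R) ∈ 𝒜 i := m.2
        have hmj : (m : R) * j ∈ 𝒜 i := by
          simpa using SetLike.mul_mem_graded hm hj
        rw [DirectSum.decompose_of_mem_ne 𝒜 hm h, DirectSum.decompose_of_mem_ne 𝒜 hmj h,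
          zero_mul]
  | add m m' hm hm' =>
      rw [add_mul]
      rw [DirectSum.decompose_add, DirectSum.decompose_add]
      push_cast [DirectSum.add_apply]
      rw [hm, hm', add_mul]

/-- Left `e`-faithfulness: the degree-zero component of any element of the left ideal
generated by a left ideal `J` of the identity component stays in `J`. -/
theorem decompose_span_mem (𝒜 : G → AddSubgroup R) [GradedRing 𝒜] (J : Ideal ↥(𝒜 0)) {x : R}
    (hx : x ∈ Ideal.span (Subtype.val '' (J : Set ↥(𝒜 0)))) :
    (DirectSum.decompose 𝒜 x 0 : R) ∈ Subtype.val '' (J : Set ↥(𝒜 0)) := by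
  have key : ∀ r : R,
      (DirectSum.decompose 𝒜 (r * x) 0 : R) ∈ Subtype.val '' (J : Set ↥(𝒜 0)) := by
    induction hx using Submodule.span_induction with
    | mem y hy =>
        intro r
        obtain ⟨a, haJ, rfl⟩ := hy
        rw [decompose_mul_zero 𝒜 a.2 r]
        exact ⟨DirectSum.decompose 𝒜 r 0 * a, J.mul_mem_left _ haJ, rfl⟩
    | zero =>
        intro r
        refine ⟨0, J.zero_mem, ?_⟩
        simp
    | add y z hy hz ihy ihz =>
        intro r
        obtain ⟨a, haJ, ha⟩ := ihy r
        obtain ⟨b, hbJ, hb⟩ := ihz r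
        have hd : (DirectSum.decompose 𝒜 (r * (y + z)) 0 : R)
            = (DirectSum.decompose 𝒜 (r * y) 0 : R) + (DirectSum.decompose 𝒜 (r * z) 0 : R) := by
          rw [mul_add, DirectSum.decompose_add]
          push_cast [DirectSum.add_apply]
          rfl
        rw [hd]
        exact ⟨a + b, J.add_mem haJ hbJ, by rw [← ha, ← hb]; rfl⟩
    | smul s y hy ih =>
        intro r
        have h : r * (s • y) = r * s * y := by rw [smul_eq_mul, mul_assoc]
        rw [h]
        exact ih (r * s)
  simpa using key 1

/-- In a first strong grading, every homogeneous left ideal is generated by its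
degree-zero part. -/
theorem span_inter_eq (𝒜 : G → AddSubgroup R) [GradedRing 𝒜]
    (hfs : ∀ σ : G, 𝒜 σ ≠ ⊥ →
      (1 : R) ∈ AddSubgroup.closure ((𝒜 σ : Set R) * (𝒜 (-σ) : Set R)))
    (I : Ideal R) (hI : Ideal.IsHomogeneous 𝒜 I) :
    Ideal.span ((I : Set R) ∩ (𝒜 0 : Set R)) = I := by
  classical
  refine le_antisymm (Ideal.span_le.mpr Set.inter_subset_left) ?_
  intro x hx
  rw [← DirectSum.sum_support_decompose 𝒜 x]
  refine Submodule.sum_mem _ fun σ _ => ?_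
  set a : R := (DirectSum.decompose 𝒜 x σ : R) with ha
  have haI : a ∈ I := hI σ hx
  have haσ : a ∈ 𝒜 σ := SetLike.coe_mem _
  by_cases h0 : a = 0
  · exact h0 ▸ (Ideal.span _).zero_mem
  · have hbot : 𝒜 σ ≠ ⊥ := fun hb => h0 (AddSubgroup.mem_bot.mp (hb ▸ haσ))
    have h1 := hfs σ hbot
    have hle : AddSubgroup.closure ((𝒜 σ : Set R) * (𝒜 (-σ) : Set R)) ≤
        AddSubgroup.comap (AddMonoidHom.mulRight a)
          (Submodule.toAddSubgroup (Ideal.span ((I : Set R) ∩ (𝒜 0 : Set R)))) := by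
      rw [AddSubgroup.closure_le]
      rintro y ⟨b, hb, c, hc, rfl⟩
      show b * c * a ∈ Ideal.span ((I : Set R) ∩ (𝒜 0 : Set R))
      rw [mul_assoc]
      refine Ideal.mul_mem_left _ _ (Ideal.subset_span ⟨I.mul_mem_left c haI, ?_⟩)
      simpa using SetLike.mul_mem_graded hc haσ
    have h2 := hle h1
    simpa using h2

/-- If the grading is first strong, i.e. `1 ∈ R_σ R_{σ⁻¹}` (the
additive subgroup generated by such products) for every `σ` in the support, then
the intersection graph of graded left ideals of `R` is isomorphic to the
intersection graph of left ideals of `R_e`. -/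
theorem stmt15 (𝒜 : G → AddSubgroup R) [GradedRing 𝒜]
    (hfs : ∀ σ : G, 𝒜 σ ≠ ⊥ →
      (1 : R) ∈ AddSubgroup.closure ((𝒜 σ : Set R) * (𝒜 (-σ) : Set R))) :
    Nonempty (interGraph (hV 𝒜) ≃g interGraph (V0 𝒜)) := by
  classical
  set ι : ↥(𝒜 0) →+* R := gz 𝒜 with hιdef
  have hset : ∀ I : Ideal R,
      Subtype.val '' ((Ideal.comap ι I : Ideal ↥(𝒜 0)) : Set ↥(𝒜 0))
        = (I : Set R) ∩ (𝒜 0 : Set R) := by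
    intro I
    ext x
    constructor
    · rintro ⟨a, ha, rfl⟩
      exact ⟨ha, a.2⟩
    · rintro ⟨h1, h2⟩
      exact ⟨⟨x, h2⟩, h1, rfl⟩
  have fact1 : ∀ I : Ideal R, Ideal.IsHomogeneous 𝒜 I →
      Ideal.span (Subtype.val '' ((Ideal.comap ι I : Ideal ↥(𝒜 0)) : Set ↥(𝒜 0))) = I := by
    intro I hI
    rw [hset]
    exact span_inter_eq 𝒜 hfs I hI
  have fact2 : ∀ J : Ideal ↥(𝒜 0),
      Ideal.comap ι (Ideal.span (Subtype.val '' (J : Set ↥(𝒜 0)))) = J := by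
    intro J
    refine le_antisymm ?_ ?_
    · intro a ha
      have h2 : (a : R) ∈ Ideal.span (Subtype.val '' (J : Set ↥(𝒜 0))) := ha
      have h3 := decompose_span_mem 𝒜 J h2
      rw [DirectSum.decompose_of_mem_same 𝒜 a.2] at h3
      obtain ⟨b, hb, hba⟩ := h3
      rwa [Subtype.coe_injective hba] at hb
    · intro a ha
      exact Ideal.mem_comap.mpr (Ideal.subset_span ⟨a, ha, rfl⟩)
  have fact3 : ∀ J : Ideal ↥(𝒜 0),
      Ideal.IsHomogeneous 𝒜 (Ideal.span (Subtype.val '' (J : Set ↥(𝒜 0)))) := by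
    intro J
    refine Ideal.homogeneous_span 𝒜 _ ?_
    rintro x ⟨a, _, rfl⟩
    exact ⟨0, a.2⟩
  have hcb : Ideal.comap ι (⊥ : Ideal R) = ⊥ := by
    ext a
    simp only [Ideal.mem_comap, Ideal.mem_bot]
    exact ⟨fun h => Subtype.coe_injective h, fun h => by rw [h]; exact map_zero ι⟩
  have hcbot : ∀ I : Ideal R, Ideal.IsHomogeneous 𝒜 I →
      (Ideal.comap ι I = ⊥ ↔ I = ⊥) := by
    intro I hI
    constructor
    · intro h
      rw [← fact1 I hI, h]
      rw [Ideal.span_eq_bot]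
      rintro x ⟨a, haJ, rfl⟩
      have : a = (0 : ↥(𝒜 0)) := by simpa using haJ
      simp [this]
    · rintro rfl
      exact hcb
  have hFmem : ∀ I : Ideal R, I ∈ hV 𝒜 → Ideal.comap ι I ∈ V0 𝒜 := by
    rintro I ⟨hbot, htop, hhom⟩
    refine ⟨fun hb => hbot ((hcbot I hhom).mp hb), fun ht => htop ?_⟩
    rw [Ideal.eq_top_iff_one]
    have h1 : (1 : ↥(𝒜 0)) ∈ Ideal.comap ι I := ht ▸ Submodule.mem_top
    have := Ideal.mem_comap.mp h1
    rwa [map_one] at this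
  have hGmem : ∀ J : Ideal ↥(𝒜 0), J ∈ V0 𝒜 →
      Ideal.span (Subtype.val '' (J : Set ↥(𝒜 0))) ∈ hV 𝒜 := by
    rintro J ⟨hbot, htop⟩
    refine ⟨?_, ?_, fact3 J⟩
    · intro hb
      exact hbot (by rw [← fact2 J, hb, hcb])
    · intro ht
      exact htop (by rw [← fact2 J, ht, Ideal.comap_top])
  let e : ↥(hV 𝒜) ≃ ↥(V0 𝒜) :=
    { toFun := fun I => ⟨Ideal.comap ι I.1, hFmem I.1 I.2⟩
      invFun := fun J => ⟨Ideal.span (Subtype.val '' (J.1 : Set ↥(𝒜 0))), hGmem J.1 J.2⟩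
      left_inv := fun I => Subtype.ext (fact1 I.1 I.2.2.2)
      right_inv := fun J => Subtype.ext (fact2 J.1) }
  refine ⟨{ toEquiv := e, map_rel_iff' := ?_ }⟩
  intro I I'
  show (e I ≠ e I' ∧ (e I : Ideal ↥(𝒜 0)) ⊓ (e I' : Ideal ↥(𝒜 0)) ≠ ⊥)
      ↔ (I ≠ I' ∧ (I : Ideal R) ⊓ (I' : Ideal R) ≠ ⊥)
  have h1 : e I ≠ e I' ↔ I ≠ I' := e.injective.ne_iff
  have hhom : Ideal.IsHomogeneous 𝒜 ((I : Ideal R) ⊓ (I' : Ideal R)) :=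
    I.2.2.2.inf I'.2.2.2
  have hci : (e I : Ideal ↥(𝒜 0)) ⊓ (e I' : Ideal ↥(𝒜 0))
      = Ideal.comap ι ((I : Ideal R) ⊓ (I' : Ideal R)) := rfl
  have h2 : (e I : Ideal ↥(𝒜 0)) ⊓ (e I' : Ideal ↥(𝒜 0)) ≠ ⊥
      ↔ (I : Ideal R) ⊓ (I' : Ideal R) ≠ ⊥ := by
    rw [hci]
    exact not_congr (hcbot _ hhom)
  rw [h1, h2]
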